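/- For all x,y ∈ ℝ₊ with x ≠ y: (a) ∂/∂x [∫₀^∞ P_t^{[λ]}(x,y) dt] = −(2λ/π) ∫₀^π (x − y·cosθ)(sinθ)^{2λ−1} / (x²+y²−2xy·cosθ)^{λ+1} dθ =: R_{Δ_λ}(x,y); and (b) lim_{t→0⁺} Q_t^{[λ]}(x,y) = R_{Δ_λ}(x,y). -/

import Mathlib

open MeasureTheory Real Set Filter

open Topology intervalIntegral

/-- The Poisson kernel for the Bessel operator `Δ_λ` (Weinstein's formula). -/
noncomputable def Pker (lam t x y : ℝ) : ℝ :=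
  (2 * lam * t / π) * ∫ θ in (0:ℝ)..π,
    (Real.sin θ ^ (2*lam - 1)) / ((x^2 + y^2 + t^2 - 2*x*y*Real.cos θ) ^ (lam + 1))

/-- The conjugate Poisson kernel for the Bessel operator `Δ_λ`. -/
noncomputable def Qker (lam t x y : ℝ) : ℝ :=
  -(2 * lam / π) * ∫ θ in (0:ℝ)..π,
    ((x - y * Real.cos θ) * Real.sin θ ^ (2*lam - 1)) /
      ((x^2 + y^2 + t^2 - 2*x*y*Real.cos θ) ^ (lam + 1))

/-- The Riesz kernel `R_{Δ_λ}(x,y)`. -/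
noncomputable def rieszKernel (lam x y : ℝ) : ℝ :=
  -(2 * lam / π) * ∫ θ in (0:ℝ)..π,
    ((x - y * Real.cos θ) * Real.sin θ ^ (2*lam - 1)) /
      ((x^2 + y^2 - 2*x*y*Real.cos θ) ^ (lam + 1))


lemma sin_rpow_integrable_half {c : ℝ} (hc : -1 < c) :
    IntervalIntegrable (fun θ => Real.sin θ ^ c) volume 0 (π/2) := by
  have hπ : (0:ℝ) < π := Real.pi_pos
  have hint : IntervalIntegrable (fun θ : ℝ => 1 + (2/π)^c * θ ^ c) volume 0 (π/2) :=
    intervalIntegrable_const.add ((intervalIntegrable_rpow' hc).const_mul _)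
  apply hint.mono_fun'
  · apply AEMeasurable.aestronglyMeasurable
    fun_prop
  · rw [Filter.EventuallyLE, ae_restrict_iff' measurableSet_uIoc]
    refine Filter.Eventually.of_forall (fun θ hθ => ?_)
    rw [Set.uIoc_of_le (by positivity)] at hθ
    obtain ⟨h0, h1⟩ := hθ
    have hs0 : 0 ≤ Real.sin θ := Real.sin_nonneg_of_nonneg_of_le_pi h0.le (by linarith)
    show ‖Real.sin θ ^ c‖ ≤ _
    rw [Real.norm_of_nonneg (Real.rpow_nonneg hs0 c)]
    rcases le_or_gt 0 c with h | h
    · have h2 : Real.sin θ ^ c ≤ 1 := Real.rpow_le_one hs0 (Real.sin_le_one θ) h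
      have h3 : 0 ≤ (2/π)^c * θ ^ c := by positivity
      linarith
    · have hlb : 2/π * θ ≤ Real.sin θ := Real.mul_le_sin h0.le h1
      have hpos : 0 < 2/π * θ := by positivity
      have h4 := Real.rpow_le_rpow_of_nonpos hpos hlb h.le
      rw [Real.mul_rpow (by positivity) h0.le] at h4
      linarith

lemma sin_rpow_integrable {c : ℝ} (hc : -1 < c) :
    IntervalIntegrable (fun θ => Real.sin θ ^ c) volume 0 π := by
  have h1 := sin_rpow_integrable_half hc
  have h2 := h1.comp_sub_left π
  simp only [Real.sin_pi_sub, sub_zero] at h2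
  have h3 : π - π/2 = π/2 := by ring
  rw [h3] at h2
  exact h1.trans h2.symm

lemma integrable_of_sin_bound {lam : ℝ} (hlam : 0 < lam) {f : ℝ → ℝ}
    (hm : AEStronglyMeasurable f (volume.restrict (Set.uIoc 0 π))) (C : ℝ)
    (hb : ∀ θ ∈ Set.Ioc (0:ℝ) π, ‖f θ‖ ≤ C * Real.sin θ ^ (2*lam - 1)) :
    IntervalIntegrable f volume 0 π := by
  have hc : (-1:ℝ) < 2*lam - 1 := by linarith
  refine ((sin_rpow_integrable hc).const_mul C).mono_fun' hm ?_
  rw [Filter.EventuallyLE, ae_restrict_iff' measurableSet_uIoc]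
  exact Filter.Eventually.of_forall fun θ hθ =>
    hb θ (by rwa [Set.uIoc_of_le Real.pi_pos.le] at hθ)

lemma base_lb (u y s : ℝ) (θ : ℝ) (hu : 0 < u) (hy : 0 < y) :
    (u - y)^2 + s^2 ≤ u^2 + y^2 + s^2 - 2*u*y*Real.cos θ := by
  nlinarith [Real.cos_le_one θ, mul_pos hu hy]

lemma base_pos (u y s : ℝ) (θ : ℝ) (hu : 0 < u) (hy : 0 < y) (huy : u ≠ y) :
    0 < u^2 + y^2 + s^2 - 2*u*y*Real.cos θ := by
  have h := base_lb u y s θ hu hy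
  have hne : u - y ≠ 0 := sub_ne_zero.mpr huy
  have : 0 < (u - y)^2 := by positivity
  nlinarith [sq_nonneg s]

lemma J_hasDerivAt (lam : ℝ) (hlam : 0 < lam) (u y : ℝ) (hu : 0 < u) (hy : 0 < y)
    (huy : u ≠ y) (t : ℝ) :
    HasDerivAt (fun s => ∫ θ in (0:ℝ)..π,
        Real.sin θ ^ (2*lam-1) * (u^2 + y^2 + s^2 - 2*u*y*Real.cos θ) ^ (-lam))
      (∫ θ in (0:ℝ)..π, Real.sin θ ^ (2*lam-1) *
        ((2*t) * (-lam) * (u^2 + y^2 + t^2 - 2*u*y*Real.cos θ) ^ (-lam-1))) t := by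
  have hπ : (0:ℝ) < π := Real.pi_pos
  set c := 2*lam - 1 with hc
  have hcgt : (-1:ℝ) < c := by simp [hc]; linarith
  set ε2 : ℝ := (u - y)^2 with hε2
  have hε2pos : 0 < ε2 := by
    have : u - y ≠ 0 := sub_ne_zero.mpr huy
    positivity
  set C : ℝ := 2*(|t|+1)*lam*ε2^(-lam-1) with hC
  have key := intervalIntegral.hasDerivAt_integral_of_dominated_loc_of_deriv_le
    (F := fun s θ => Real.sin θ ^ c * (u^2 + y^2 + s^2 - 2*u*y*Real.cos θ) ^ (-lam))
    (F' := fun s θ => Real.sin θ ^ c *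
        ((2*s) * (-lam) * (u^2 + y^2 + s^2 - 2*u*y*Real.cos θ) ^ (-lam-1)))
    (x₀ := t) (a := 0) (b := π) (μ := volume)
    (bound := fun θ => C * Real.sin θ ^ c)
    (s := Metric.ball t 1) (Metric.ball_mem_nhds t one_pos) ?_ ?_ ?_ ?_ ?_ ?_
  · exact key.2
  · -- measurability of F s
    refine Filter.Eventually.of_forall fun s => ?_
    apply AEMeasurable.aestronglyMeasurable
    fun_prop
  · -- integrability of F t
    apply integrable_of_sin_bound hlam
    · apply AEMeasurable.aestronglyMeasurable; fun_prop
    · intro θ hθ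
      have hs0 : 0 ≤ Real.sin θ := Real.sin_nonneg_of_nonneg_of_le_pi hθ.1.le hθ.2
      have hb := base_pos u y t θ hu hy huy
      have hle : ε2 ≤ u^2 + y^2 + t^2 - 2*u*y*Real.cos θ := by
        have := base_lb u y t θ hu hy; nlinarith [sq_nonneg t]
      have h1 : (u^2 + y^2 + t^2 - 2*u*y*Real.cos θ) ^ (-lam) ≤ ε2 ^ (-lam) :=
        Real.rpow_le_rpow_of_nonpos hε2pos hle (by linarith)
      rw [norm_mul, Real.norm_of_nonneg (Real.rpow_nonneg hs0 c),
        Real.norm_of_nonneg (Real.rpow_nonneg hb.le _)]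
      calc Real.sin θ ^ c * (u^2 + y^2 + t^2 - 2*u*y*Real.cos θ) ^ (-lam)
          ≤ Real.sin θ ^ c * ε2 ^ (-lam) := by
            exact mul_le_mul_of_nonneg_left h1 (Real.rpow_nonneg hs0 c)
        _ = ε2 ^ (-lam) * Real.sin θ ^ c := mul_comm _ _
  · -- measurability of F' t
    apply AEMeasurable.aestronglyMeasurable; fun_prop
  · -- bound on F'
    refine Filter.Eventually.of_forall fun θ hθ => fun s hs => ?_
    rw [Set.uIoc_of_le hπ.le] at hθ
    have hs0 : 0 ≤ Real.sin θ := Real.sin_nonneg_of_nonneg_of_le_pi hθ.1.le hθ.2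
    have hb := base_pos u y s θ hu hy huy
    have hle : ε2 ≤ u^2 + y^2 + s^2 - 2*u*y*Real.cos θ := by
      have := base_lb u y s θ hu hy; nlinarith [sq_nonneg s]
    have h1 : (u^2 + y^2 + s^2 - 2*u*y*Real.cos θ) ^ (-lam-1) ≤ ε2 ^ (-lam-1) :=
      Real.rpow_le_rpow_of_nonpos hε2pos hle (by linarith)
    have hsabs : |s| ≤ |t| + 1 := by
      have := Metric.mem_ball.mp hs
      rw [Real.dist_eq] at this
      have h2 := abs_sub_abs_le_abs_sub s t
      linarith
    rw [norm_mul, Real.norm_of_nonneg (Real.rpow_nonneg hs0 c), norm_mul, norm_mul,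
      Real.norm_of_nonneg (Real.rpow_nonneg hb.le _)]
    have h3 : ‖2*s‖ * ‖-lam‖ ≤ 2*(|t|+1)*lam := by
      rw [Real.norm_eq_abs, Real.norm_eq_abs, abs_neg, abs_of_pos hlam, abs_mul]
      have : |(2:ℝ)| = 2 := by norm_num
      rw [this]
      nlinarith [abs_nonneg s, abs_nonneg t]
    calc Real.sin θ ^ c * (‖2*s‖ * ‖-lam‖ *
            (u^2 + y^2 + s^2 - 2*u*y*Real.cos θ) ^ (-lam-1))
        ≤ Real.sin θ ^ c * (2*(|t|+1)*lam * ε2^(-lam-1)) := by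
          apply mul_le_mul_of_nonneg_left _ (Real.rpow_nonneg hs0 c)
          apply mul_le_mul h3 h1 (Real.rpow_nonneg hb.le _)
          positivity
      _ = C * Real.sin θ ^ c := by rw [hC]; ring
  · -- integrability of bound
    exact (sin_rpow_integrable hcgt).const_mul C
  · -- differentiability
    refine Filter.Eventually.of_forall fun θ hθ => fun s hs => ?_
    have hb := base_pos u y s θ hu hy huy
    have hD : HasDerivAt (fun s : ℝ => u^2 + y^2 + s^2 - 2*u*y*Real.cos θ) (2*s) s := by
      have h1 : HasDerivAt (fun s : ℝ => s^2) (2*s) s := by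
        simpa using hasDerivAt_pow 2 s
      simpa using (h1.const_add (u^2 + y^2)).sub_const (2*u*y*Real.cos θ)
    have h2 := hD.rpow_const (p := -lam) (Or.inl hb.ne')
    have h3 := h2.const_mul (Real.sin θ ^ c)
    exact h3

lemma Feq (lam : ℝ) (hlam : 0 < lam) (u y : ℝ) (hu : 0 < u) (hy : 0 < y) (huy : u ≠ y) :
    ∫ t in Set.Ioi (0:ℝ), Pker lam t u y
      = (1/π) * ∫ θ in (0:ℝ)..π,
          Real.sin θ ^ (2*lam-1) * (u^2 + y^2 - 2*u*y*Real.cos θ) ^ (-lam) := by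
  have hπ : (0:ℝ) < π := Real.pi_pos
  set c := 2*lam - 1 with hc
  have hcgt : (-1:ℝ) < c := by rw [hc]; linarith
  set J : ℝ → ℝ := fun s => ∫ θ in (0:ℝ)..π,
      Real.sin θ ^ c * (u^2 + y^2 + s^2 - 2*u*y*Real.cos θ) ^ (-lam) with hJ
  set g : ℝ → ℝ := fun s => -(1/π) * J s with hg
  have hgd : ∀ t : ℝ, HasDerivAt g (Pker lam t u y) t := by
    intro t
    have h := (J_hasDerivAt lam hlam u y hu hy huy t).const_mul (-(1/π))
    convert h using 1
    · rfl
    · rfl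
    have hintg : ∀ θ : ℝ,
        Real.sin θ ^ c * ((2*t) * (-lam) * (u^2 + y^2 + t^2 - 2*u*y*Real.cos θ) ^ (-lam-1))
        = (-(2*lam*t)) * (Real.sin θ ^ c / (u^2 + y^2 + t^2 - 2*u*y*Real.cos θ) ^ (lam+1)) := by
      intro θ
      have hb := base_pos u y t θ hu hy huy
      rw [show (-lam-1 : ℝ) = -(lam+1) by ring, Real.rpow_neg hb.le, div_eq_mul_inv]
      ring
    rw [Pker]
    calc (2*lam*t/π) * ∫ θ in (0:ℝ)..π,
          Real.sin θ ^ c / (u^2 + y^2 + t^2 - 2*u*y*Real.cos θ) ^ (lam+1)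
        = -(1/π) * ∫ θ in (0:ℝ)..π, (-(2*lam*t)) *
            (Real.sin θ ^ c / (u^2 + y^2 + t^2 - 2*u*y*Real.cos θ) ^ (lam+1)) := by
          rw [intervalIntegral.integral_const_mul]; ring
      _ = -(1/π) * ∫ θ in (0:ℝ)..π, Real.sin θ ^ c *
            ((2*t) * (-lam) * (u^2 + y^2 + t^2 - 2*u*y*Real.cos θ) ^ (-lam-1)) := by
          congr 1
          exact intervalIntegral.integral_congr fun θ _ => (hintg θ).symm
  have htend : Tendsto g atTop (𝓝 0) := by
    set S : ℝ := ∫ θ in (0:ℝ)..π, Real.sin θ ^ c with hS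
    have hS0 : 0 ≤ S := intervalIntegral.integral_nonneg hπ.le fun θ hθ =>
      Real.rpow_nonneg (Real.sin_nonneg_of_nonneg_of_le_pi hθ.1 hθ.2) c
    apply squeeze_zero_norm' (a := fun s : ℝ => (1/π) * ((s^2)^(-lam) * S))
    · filter_upwards [Filter.eventually_ge_atTop (1:ℝ)] with s hs1
      have hs0 : (0:ℝ) < s := by linarith
      have hJb : ‖J s‖ ≤ |∫ θ in (0:ℝ)..π, (s^2)^(-lam) * Real.sin θ ^ c| := by
        apply intervalIntegral.norm_integral_le_abs_of_norm_le
        · rw [ae_restrict_iff' measurableSet_uIoc]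
          refine Filter.Eventually.of_forall fun θ hθ => ?_
          rw [Set.uIoc_of_le hπ.le] at hθ
          have hsin : 0 ≤ Real.sin θ := Real.sin_nonneg_of_nonneg_of_le_pi hθ.1.le hθ.2
          have hb := base_pos u y s θ hu hy huy
          have hle : s^2 ≤ u^2 + y^2 + s^2 - 2*u*y*Real.cos θ := by
            have := base_lb u y s θ hu hy; nlinarith [sq_nonneg (u-y)]
          have h1 : (u^2 + y^2 + s^2 - 2*u*y*Real.cos θ) ^ (-lam) ≤ (s^2) ^ (-lam) :=
            Real.rpow_le_rpow_of_nonpos (by positivity) hle (by linarith)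
          rw [norm_mul, Real.norm_of_nonneg (Real.rpow_nonneg hsin c),
            Real.norm_of_nonneg (Real.rpow_nonneg hb.le _)]
          calc Real.sin θ ^ c * (u^2 + y^2 + s^2 - 2*u*y*Real.cos θ) ^ (-lam)
              ≤ Real.sin θ ^ c * (s^2) ^ (-lam) :=
                mul_le_mul_of_nonneg_left h1 (Real.rpow_nonneg hsin c)
            _ = (s^2)^(-lam) * Real.sin θ ^ c := mul_comm _ _
        · exact (sin_rpow_integrable hcgt).const_mul _
      rw [intervalIntegral.integral_const_mul, ← hS] at hJb
      rw [abs_of_nonneg (mul_nonneg (Real.rpow_nonneg (by positivity) _) hS0)] at hJb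
      rw [hg]
      simp only [norm_mul, norm_neg, Real.norm_eq_abs]
      rw [abs_of_pos (by positivity : (0:ℝ) < 1/π)]
      exact mul_le_mul_of_nonneg_left hJb (by positivity)
    · have h2 : Tendsto (fun s : ℝ => s ^ (-(2*lam))) atTop (𝓝 0) :=
        tendsto_rpow_neg_atTop (by linarith)
      have h3 : Tendsto (fun s : ℝ => (1/π*S) * s ^ (-(2*lam))) atTop (𝓝 0) := by
        simpa using h2.const_mul (1/π*S)
      apply h3.congr'
      filter_upwards [Filter.eventually_ge_atTop (1:ℝ)] with s hs1
      have hs0 : (0:ℝ) ≤ s := by linarith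
      rw [show (s:ℝ)^2 = s ^ ((2:ℕ):ℝ) by rw [Real.rpow_natCast],
        ← Real.rpow_mul hs0, show ((2:ℕ):ℝ) * (-lam) = -(2*lam) by push_cast; ring]
      ring
  have hcont : ContinuousWithinAt g (Set.Ici 0) 0 :=
    (hgd 0).continuousAt.continuousWithinAt
  have hnonneg : ∀ t ∈ Set.Ioi (0:ℝ), 0 ≤ Pker lam t u y := by
    intro t ht
    have ht' : (0:ℝ) < t := ht
    rw [Pker]
    apply mul_nonneg (by positivity)
    apply intervalIntegral.integral_nonneg hπ.le
    intro θ hθ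
    have hsin : 0 ≤ Real.sin θ := Real.sin_nonneg_of_nonneg_of_le_pi hθ.1 hθ.2
    have hb := base_pos u y t θ hu hy huy
    exact div_nonneg (Real.rpow_nonneg hsin c) (Real.rpow_nonneg hb.le _)
  have hkey := integral_Ioi_of_hasDerivAt_of_nonneg hcont (fun t _ => hgd t) hnonneg htend
  rw [hkey, hg]
  simp only [zero_sub, neg_mul, neg_neg]
  congr 1
  rw [hJ]
  apply intervalIntegral.integral_congr
  intro θ _
  norm_num

lemma base0_lb (u y : ℝ) (θ : ℝ) (hu : 0 < u) (hy : 0 < y) :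
    (u - y)^2 ≤ u^2 + y^2 - 2*u*y*Real.cos θ := by
  nlinarith [Real.cos_le_one θ, mul_pos hu hy]

lemma ball_facts {x y : ℝ} (hx : 0 < x) (hy : 0 < y) (hxy : x ≠ y) :
    ∀ u ∈ Metric.ball x (min (x/2) (|x-y|/2)), 0 < u ∧ (|x-y|/2)^2 ≤ (u-y)^2 := by
  intro u hu
  rw [Metric.mem_ball, Real.dist_eq] at hu
  have h1 : |u - x| < x/2 := lt_of_lt_of_le hu (min_le_left _ _)
  have h2 : |u - x| < |x-y|/2 := lt_of_lt_of_le hu (min_le_right _ _)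
  have h3 := abs_le.mp h1.le
  constructor
  · linarith [h3.1]
  · have h4 : |x-y|/2 ≤ |u - y| := by
      have h5 := abs_sub_abs_le_abs_sub (x - y) (x - u)
      have h6 : (x - y) - (x - u) = u - y := by ring
      rw [h6] at h5
      rw [abs_sub_comm u x] at h2
      linarith
    calc (|x-y|/2)^2 ≤ |u-y|^2 := by
          apply pow_le_pow_left₀ (by positivity) h4
      _ = (u-y)^2 := sq_abs _

lemma G_hasDerivAt (lam : ℝ) (hlam : 0 < lam) (x y : ℝ) (hx : 0 < x) (hy : 0 < y)
    (hxy : x ≠ y) :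
    HasDerivAt (fun u => (1/π) * ∫ θ in (0:ℝ)..π,
        Real.sin θ ^ (2*lam-1) * (u^2 + y^2 - 2*u*y*Real.cos θ) ^ (-lam))
      (rieszKernel lam x y) x := by
  have hπ : (0:ℝ) < π := Real.pi_pos
  set c := 2*lam - 1 with hc
  have hcgt : (-1:ℝ) < c := by rw [hc]; linarith
  set ε : ℝ := min (x/2) (|x-y|/2) with hε
  have hxyne : x - y ≠ 0 := sub_ne_zero.mpr hxy
  have hεpos : 0 < ε := by
    apply lt_min (by positivity)
    have : 0 < |x - y| := abs_pos.mpr hxyne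
    positivity
  set δ : ℝ := (|x-y|/2)^2 with hδ
  have hδpos : 0 < δ := by
    have : 0 < |x - y| := abs_pos.mpr hxyne
    positivity
  have hD0 : ∀ (u : ℝ), 0 < u → δ ≤ (u-y)^2 → ∀ θ : ℝ,
      0 < u^2 + y^2 - 2*u*y*Real.cos θ := by
    intro u hu hδu θ
    have := base0_lb u y θ hu hy
    linarith
  set Cb : ℝ := (2*(x+ε)+2*y)*lam*δ^(-lam-1) with hCb
  have key := intervalIntegral.hasDerivAt_integral_of_dominated_loc_of_deriv_le
    (F := fun u θ => Real.sin θ ^ c * (u^2 + y^2 - 2*u*y*Real.cos θ) ^ (-lam))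
    (F' := fun u θ => Real.sin θ ^ c *
        ((2*u - 2*y*Real.cos θ) * (-lam) * (u^2 + y^2 - 2*u*y*Real.cos θ) ^ (-lam-1)))
    (x₀ := x) (a := 0) (b := π) (μ := volume)
    (bound := fun θ => Cb * Real.sin θ ^ c)
    (s := Metric.ball x ε) (Metric.ball_mem_nhds x hεpos) ?_ ?_ ?_ ?_ ?_ ?_
  · have h := key.2.const_mul (1/π)
    have heq : (1/π) * ∫ θ in (0:ℝ)..π, Real.sin θ ^ c *
        ((2*x - 2*y*Real.cos θ) * (-lam) * (x^2 + y^2 - 2*x*y*Real.cos θ) ^ (-lam-1))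
        = rieszKernel lam x y := by
      rw [rieszKernel]
      have hb := ball_facts hx hy hxy x (Metric.mem_ball_self hεpos)
      have hintg : ∀ θ : ℝ,
          Real.sin θ ^ c * ((2*x - 2*y*Real.cos θ) * (-lam) *
            (x^2 + y^2 - 2*x*y*Real.cos θ) ^ (-lam-1))
          = (-(2*lam)) * ((x - y*Real.cos θ) * Real.sin θ ^ c /
            (x^2 + y^2 - 2*x*y*Real.cos θ) ^ (lam+1)) := by
        intro θ
        have hb2 := hD0 x hx hb.2 θ
        rw [show (-lam-1 : ℝ) = -(lam+1) by ring, Real.rpow_neg hb2.le, div_eq_mul_inv]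
        ring
      calc (1/π) * ∫ θ in (0:ℝ)..π, Real.sin θ ^ c *
            ((2*x - 2*y*Real.cos θ) * (-lam) * (x^2 + y^2 - 2*x*y*Real.cos θ) ^ (-lam-1))
          = (1/π) * ∫ θ in (0:ℝ)..π, (-(2*lam)) * ((x - y*Real.cos θ) * Real.sin θ ^ c /
              (x^2 + y^2 - 2*x*y*Real.cos θ) ^ (lam+1)) := by
            congr 1
            exact intervalIntegral.integral_congr fun θ _ => hintg θ
        _ = -(2*lam/π) * ∫ θ in (0:ℝ)..π, (x - y*Real.cos θ) * Real.sin θ ^ c /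
              (x^2 + y^2 - 2*x*y*Real.cos θ) ^ (lam+1) := by
            rw [intervalIntegral.integral_const_mul]; ring
    rw [heq] at h
    exact h
  · refine Filter.Eventually.of_forall fun u => ?_
    apply AEMeasurable.aestronglyMeasurable; fun_prop
  · -- integrability of F x
    apply integrable_of_sin_bound hlam (C := δ^(-lam))
    · apply AEMeasurable.aestronglyMeasurable; fun_prop
    · intro θ hθ
      have hsin : 0 ≤ Real.sin θ := Real.sin_nonneg_of_nonneg_of_le_pi hθ.1.le hθ.2
      have hbx := ball_facts hx hy hxy x (Metric.mem_ball_self hεpos)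
      have hb2 := hD0 x hx hbx.2 θ
      have hle : δ ≤ x^2 + y^2 - 2*x*y*Real.cos θ := by
        have := base0_lb x y θ hx hy; linarith [hbx.2]
      have h1 : (x^2 + y^2 - 2*x*y*Real.cos θ) ^ (-lam) ≤ δ ^ (-lam) :=
        Real.rpow_le_rpow_of_nonpos hδpos hle (by linarith)
      rw [norm_mul, Real.norm_of_nonneg (Real.rpow_nonneg hsin c),
        Real.norm_of_nonneg (Real.rpow_nonneg hb2.le _)]
      calc Real.sin θ ^ c * (x^2 + y^2 - 2*x*y*Real.cos θ) ^ (-lam)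
          ≤ Real.sin θ ^ c * δ ^ (-lam) :=
            mul_le_mul_of_nonneg_left h1 (Real.rpow_nonneg hsin c)
        _ = δ^(-lam) * Real.sin θ ^ c := mul_comm _ _
  · apply AEMeasurable.aestronglyMeasurable; fun_prop
  · -- bound on F'
    refine Filter.Eventually.of_forall fun θ hθ => fun u hu => ?_
    rw [Set.uIoc_of_le hπ.le] at hθ
    have hsin : 0 ≤ Real.sin θ := Real.sin_nonneg_of_nonneg_of_le_pi hθ.1.le hθ.2
    obtain ⟨hu0, hδu⟩ := ball_facts hx hy hxy u hu
    have hb2 := hD0 u hu0 hδu θ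
    have hle : δ ≤ u^2 + y^2 - 2*u*y*Real.cos θ := by
      have := base0_lb u y θ hu0 hy; linarith
    have h1 : (u^2 + y^2 - 2*u*y*Real.cos θ) ^ (-lam-1) ≤ δ ^ (-lam-1) :=
      Real.rpow_le_rpow_of_nonpos hδpos hle (by linarith)
    have huup : u ≤ x + ε := by
      rw [Metric.mem_ball, Real.dist_eq] at hu
      have := abs_le.mp hu.le
      linarith [this.2]
    have h2 : |2*u - 2*y*Real.cos θ| ≤ 2*(x+ε)+2*y := by
      rw [abs_le]
      constructor <;> nlinarith [Real.cos_le_one θ, Real.neg_one_le_cos θ]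
    rw [norm_mul, Real.norm_of_nonneg (Real.rpow_nonneg hsin c), norm_mul, norm_mul,
      Real.norm_of_nonneg (Real.rpow_nonneg hb2.le _)]
    have h3 : ‖2*u - 2*y*Real.cos θ‖ * ‖-lam‖ ≤ (2*(x+ε)+2*y)*lam := by
      rw [Real.norm_eq_abs, Real.norm_eq_abs, abs_neg, abs_of_pos hlam]
      apply mul_le_mul_of_nonneg_right h2 hlam.le
    calc Real.sin θ ^ c * (‖2*u - 2*y*Real.cos θ‖ * ‖-lam‖ *
            (u^2 + y^2 - 2*u*y*Real.cos θ) ^ (-lam-1))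
        ≤ Real.sin θ ^ c * ((2*(x+ε)+2*y)*lam * δ^(-lam-1)) := by
          apply mul_le_mul_of_nonneg_left _ (Real.rpow_nonneg hsin c)
          apply mul_le_mul h3 h1 (Real.rpow_nonneg hb2.le _)
          positivity
      _ = Cb * Real.sin θ ^ c := by rw [hCb]; ring
  · exact (sin_rpow_integrable hcgt).const_mul Cb
  · -- differentiability
    refine Filter.Eventually.of_forall fun θ hθ => fun u hu => ?_
    obtain ⟨hu0, hδu⟩ := ball_facts hx hy hxy u hu
    have hb2 := hD0 u hu0 hδu θ
    have h1 : HasDerivAt (fun u : ℝ => u^2) (2*u) u := by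
      simpa using hasDerivAt_pow 2 u
    have h2 : HasDerivAt (fun u : ℝ => 2*u*y*Real.cos θ) (2*y*Real.cos θ) u := by
      have h2' : (fun u : ℝ => 2*u*y*Real.cos θ) = fun u : ℝ => (2*y*Real.cos θ) * u := by
        funext v; ring
      rw [h2']
      simpa using (hasDerivAt_id u).const_mul (2*y*Real.cos θ)
    have hD := (h1.add_const (y^2)).sub h2
    have h3 := hD.rpow_const (p := -lam) (Or.inl hb2.ne')
    exact h3.const_mul (Real.sin θ ^ c)

lemma Q_tendsto (lam : ℝ) (hlam : 0 < lam) (x y : ℝ) (hx : 0 < x) (hy : 0 < y)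
    (hxy : x ≠ y) :
    Filter.Tendsto (fun t => Qker lam t x y) (nhdsWithin 0 (Set.Ioi 0))
      (nhds (rieszKernel lam x y)) := by
  have hπ : (0:ℝ) < π := Real.pi_pos
  set c := 2*lam - 1 with hc
  have hcgt : (-1:ℝ) < c := by rw [hc]; linarith
  have hxyne : x - y ≠ 0 := sub_ne_zero.mpr hxy
  set δ : ℝ := (x-y)^2 with hδ
  have hδpos : 0 < δ := by positivity
  have hDlb : ∀ t θ : ℝ, δ ≤ x^2 + y^2 + t^2 - 2*x*y*Real.cos θ := by
    intro t θ
    nlinarith [Real.cos_le_one θ, mul_pos hx hy, sq_nonneg t]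
  have hDpos : ∀ t θ : ℝ, 0 < x^2 + y^2 + t^2 - 2*x*y*Real.cos θ := fun t θ =>
    lt_of_lt_of_le hδpos (hDlb t θ)
  have hD0pos : ∀ θ : ℝ, 0 < x^2 + y^2 - 2*x*y*Real.cos θ := by
    intro θ
    have := hDpos 0 θ
    nlinarith
  have hmain : Filter.Tendsto (fun t => ∫ θ in (0:ℝ)..π,
      ((x - y * Real.cos θ) * Real.sin θ ^ c) /
        ((x^2 + y^2 + t^2 - 2*x*y*Real.cos θ) ^ (lam + 1)))
      (nhdsWithin 0 (Set.Ioi 0))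
      (nhds (∫ θ in (0:ℝ)..π, ((x - y * Real.cos θ) * Real.sin θ ^ c) /
        ((x^2 + y^2 - 2*x*y*Real.cos θ) ^ (lam + 1)))) := by
    apply intervalIntegral.tendsto_integral_filter_of_dominated_convergence
      (bound := fun θ => ((x+y) / δ^(lam+1)) * Real.sin θ ^ c)
    · refine Filter.Eventually.of_forall fun t => ?_
      apply AEMeasurable.aestronglyMeasurable; fun_prop
    · refine Filter.Eventually.of_forall fun t => ?_
      refine Filter.Eventually.of_forall fun θ hθ => ?_
      rw [Set.uIoc_of_le hπ.le] at hθ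
      have hsin : 0 ≤ Real.sin θ := Real.sin_nonneg_of_nonneg_of_le_pi hθ.1.le hθ.2
      have hD := hDpos t θ
      have hnum : |x - y*Real.cos θ| ≤ x + y := by
        rw [abs_le]
        constructor <;> nlinarith [Real.cos_le_one θ, Real.neg_one_le_cos θ]
      have hden : δ^(lam+1) ≤ (x^2 + y^2 + t^2 - 2*x*y*Real.cos θ) ^ (lam+1) :=
        Real.rpow_le_rpow hδpos.le (hDlb t θ) (by linarith)
      rw [norm_div, norm_mul, Real.norm_of_nonneg (Real.rpow_nonneg hsin c),
        Real.norm_of_nonneg (Real.rpow_nonneg hD.le _), Real.norm_eq_abs]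
      rw [div_le_iff₀ (by positivity : (0:ℝ) < (x^2 + y^2 + t^2 - 2*x*y*Real.cos θ) ^ (lam+1))]
      have hsn := Real.rpow_nonneg hsin c
      calc |x - y*Real.cos θ| * Real.sin θ ^ c
          ≤ (x+y) * Real.sin θ ^ c := mul_le_mul_of_nonneg_right hnum hsn
        _ = ((x+y) / δ^(lam+1)) * Real.sin θ ^ c * δ^(lam+1) := by
            field_simp
        _ ≤ ((x+y) / δ^(lam+1)) * Real.sin θ ^ c *
              (x^2 + y^2 + t^2 - 2*x*y*Real.cos θ) ^ (lam+1) := by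
            apply mul_le_mul_of_nonneg_left hden
            exact mul_nonneg (by positivity) hsn
    · exact (sin_rpow_integrable hcgt).const_mul _
    · refine Filter.Eventually.of_forall fun θ hθ => ?_
      have hD0 := hD0pos θ
      have hcont : ContinuousAt (fun t : ℝ =>
          ((x - y * Real.cos θ) * Real.sin θ ^ c) /
            ((x^2 + y^2 + t^2 - 2*x*y*Real.cos θ) ^ (lam + 1))) 0 := by
        apply ContinuousAt.div continuousAt_const
        · apply ContinuousAt.rpow_const
          · fun_prop
          · left; norm_num; nlinarith
        · apply ne_of_gt
          apply Real.rpow_pos_of_pos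
          have := hDpos 0 θ; nlinarith
      have h0 : ((x - y * Real.cos θ) * Real.sin θ ^ c) /
            ((x^2 + y^2 + (0:ℝ)^2 - 2*x*y*Real.cos θ) ^ (lam + 1))
          = ((x - y * Real.cos θ) * Real.sin θ ^ c) /
            ((x^2 + y^2 - 2*x*y*Real.cos θ) ^ (lam + 1)) := by norm_num
      have := hcont.tendsto.mono_left (nhdsWithin_le_nhds (s := Set.Ioi (0:ℝ)))
      rw [h0] at this
      exact this
  have h2 := hmain.const_mul (-(2*lam/π))
  simp only [Qker, rieszKernel]
  exact h2

/-- For `x ≠ y` in `ℝ₊`: (a) `∂_x ∫₀^∞ P_t^{[λ]}(x,y) dt = R_{Δ_λ}(x,y)`, and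
(b) `lim_{t→0⁺} Q_t^{[λ]}(x,y) = R_{Δ_λ}(x,y)`. -/
theorem riesz_kernel_eq_deriv_and_limit (lam : ℝ) (hlam : 0 < lam)
    (x y : ℝ) (hx : 0 < x) (hy : 0 < y) (hxy : x ≠ y) :
    HasDerivAt (fun u : ℝ => ∫ t in Set.Ioi (0:ℝ), Pker lam t u y)
      (rieszKernel lam x y) x ∧
    Filter.Tendsto (fun t => Qker lam t x y) (nhdsWithin 0 (Set.Ioi 0))
      (nhds (rieszKernel lam x y)) := by
  constructor
  · have hG := G_hasDerivAt lam hlam x y hx hy hxy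
    apply hG.congr_of_eventuallyEq
    have hxyne : x - y ≠ 0 := sub_ne_zero.mpr hxy
    have hεpos : 0 < min (x/2) (|x-y|/2) := by
      apply lt_min (by positivity)
      have : 0 < |x - y| := abs_pos.mpr hxyne
      positivity
    filter_upwards [Metric.ball_mem_nhds x hεpos] with u hu
    obtain ⟨hu0, hδu⟩ := ball_facts hx hy hxy u hu
    have huy : u ≠ y := by
      intro h
      rw [h, sub_self] at hδu
      have : 0 < (|x-y|/2)^2 := by
        have : 0 < |x - y| := abs_pos.mpr hxyne
        positivity
      simp only [ne_eq, OfNat.ofNat_ne_zero, not_false_eq_true, zero_pow] at hδu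
      linarith
    exact Feq lam hlam u y hu0 hy huy
  · exact Q_tendsto lam hlam x y hx hy hxy
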